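/- Let G be a finite abelian group, k a field whose characteristic does not divide |G|, and χ₁,…,χ_N : G → kˣ characters, with G acting diagonally on k[x₁,…,x_N] by g·x_i = χ_i(g)x_i. Then every G-invariant rational function of degree at most d lies in the subfield of k(x₁,…,x_N) generated over k by the G-invariant Laurent monomials of degree at most d, i.e. by {x^a : a ∈ L(G,V), deg a ≤ d}. -/
import Mathlib


open MvPolynomial

noncomputable section

variable {k : Type} [Field k] {N : ℕ} {G : Type}

def mAct (M : Matrix (Fin N) (Fin N) k) :
    MvPolynomial (Fin N) k →ₐ[k] MvPolynomial (Fin N) k :=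
  aeval fun i => ∑ j, C (M i j) * X j

lemma mAct_comp (A B : Matrix (Fin N) (Fin N) k) :
    (mAct A).comp (mAct B) = mAct (B * A) := by
  apply MvPolynomial.algHom_ext
  intro i
  simp only [mAct, AlgHom.comp_apply, aeval_X, map_sum, map_mul, aeval_C, algebraMap_eq,
    Finset.mul_sum, Matrix.mul_apply, Finset.sum_mul]
  rw [Finset.sum_comm]
  simp [mul_assoc]

lemma mAct_one : mAct (1 : Matrix (Fin N) (Fin N) k) = AlgHom.id k _ := by
  apply MvPolynomial.algHom_ext
  intro i
  simp [mAct, Matrix.one_apply, ite_mul, apply_ite C]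

def mEquiv (M : GL (Fin N) k) :
    MvPolynomial (Fin N) k ≃ₐ[k] MvPolynomial (Fin N) k :=
  AlgEquiv.ofAlgHom (mAct (M : Matrix (Fin N) (Fin N) k))
    (mAct ((M⁻¹ : GL (Fin N) k) : Matrix (Fin N) (Fin N) k))
    (by rw [mAct_comp, Units.inv_mul, mAct_one])
    (by rw [mAct_comp, Units.mul_inv, mAct_one])

def fAct (M : GL (Fin N) k) :
    FractionRing (MvPolynomial (Fin N) k) ≃+* FractionRing (MvPolynomial (Fin N) k) :=
  IsFractionRing.ringEquivOfRingEquiv (mEquiv M).toRingEquiv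

/-- `f` is an invariant rational function for the linear action `ρ`. -/
def IsInv (ρ : G → GL (Fin N) k) (f : FractionRing (MvPolynomial (Fin N) k)) : Prop :=
  ∀ g, fAct (ρ g) f = f

/-- `f`, written as a quotient `f₁/f₂` of coprime polynomials, has
`deg f = deg f₁ + deg f₂ ≤ d`. -/
def RDegLE (f : FractionRing (MvPolynomial (Fin N) k)) (d : ℕ) : Prop :=
  ∃ f₁ f₂ : MvPolynomial (Fin N) k, f₂ ≠ 0 ∧
    (∀ p : MvPolynomial (Fin N) k, p ∣ f₁ → p ∣ f₂ → IsUnit p) ∧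
    f = algebraMap (MvPolynomial (Fin N) k) (FractionRing (MvPolynomial (Fin N) k)) f₁ /
        algebraMap (MvPolynomial (Fin N) k) (FractionRing (MvPolynomial (Fin N) k)) f₂ ∧
    f₁.totalDegree + f₂.totalDegree ≤ d

/-- `f` is (the image in `k(V)` of) a polynomial of degree at most `d`. -/
def PDegLE (f : FractionRing (MvPolynomial (Fin N) k)) (d : ℕ) : Prop :=
  ∃ p : MvPolynomial (Fin N) k, p.totalDegree ≤ d ∧
    f = algebraMap (MvPolynomial (Fin N) k) (FractionRing (MvPolynomial (Fin N) k)) p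

/-- `β^r(G,V)`: the least `d` such that the invariant rational functions of degree at most `d`
generate the invariant field over `k`. -/
def betaR (ρ : G → GL (Fin N) k) : ℕ :=
  sInf {d : ℕ | ∀ f, IsInv ρ f →
    f ∈ IntermediateField.adjoin k {h | IsInv ρ h ∧ RDegLE h d}}

/-- `β(G,V)`: the least `d` such that the invariant polynomials of degree at most `d`
generate the invariant field over `k`. -/
def betaP (ρ : G → GL (Fin N) k) : ℕ :=
  sInf {d : ℕ | ∀ f, IsInv ρ f →
    f ∈ IntermediateField.adjoin k {h | IsInv ρ h ∧ PDegLE h d}}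

/-- `γ^r(G,V)`: the least `d` such that the invariant rational functions of degree at most `d`
contain a transcendence basis for the invariant field over `k`. -/
def gammaR (ρ : G → GL (Fin N) k) : ℕ :=
  sInf {d : ℕ | ∃ s : Set (FractionRing (MvPolynomial (Fin N) k)),
    (∀ f ∈ s, IsInv ρ f ∧ RDegLE f d) ∧
    AlgebraicIndependent k ((↑) : s → FractionRing (MvPolynomial (Fin N) k)) ∧
    ∀ f, IsInv ρ f → IsAlgebraic (IntermediateField.adjoin k s) f}

/-- `γ(G,V)`: the least `d` such that the invariant polynomials of degree at most `d`
contain a transcendence basis for the invariant field over `k`. -/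
def gammaP (ρ : G → GL (Fin N) k) : ℕ :=
  sInf {d : ℕ | ∃ s : Set (FractionRing (MvPolynomial (Fin N) k)),
    (∀ f ∈ s, IsInv ρ f ∧ PDegLE f d) ∧
    AlgebraicIndependent k ((↑) : s → FractionRing (MvPolynomial (Fin N) k)) ∧
    ∀ f, IsInv ρ f → IsAlgebraic (IntermediateField.adjoin k s) f}

variable [CommGroup G]

/-- The invertible diagonal matrix with units `c i` on the diagonal. -/
def diagGL (c : Fin N → kˣ) : GL (Fin N) k :=
  ⟨Matrix.diagonal fun i => (c i : k), Matrix.diagonal fun i => ((c i)⁻¹ : kˣ),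
   by simp [Matrix.diagonal_mul_diagonal], by simp [Matrix.diagonal_mul_diagonal]⟩

/-- The diagonal linear action of `G` attached to a tuple of characters `χ i : G →* kˣ`:
`g` acts by scaling the `i`-th coordinate by `χ i g`. -/
def diagρ (χ : Fin N → (G →* kˣ)) : G → GL (Fin N) k :=
  fun g => diagGL fun i => χ i g

/-- The exponent vector `a ∈ ℤᴺ` lies in the lattice `L(G,V)` of exponent vectors of
`G`-invariant Laurent monomials. -/
def inLat (χ : Fin N → (G →* kˣ)) (a : Fin N → ℤ) : Prop :=
  ∀ g, ∏ i, (χ i g) ^ (a i) = 1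

/-- The degree (`L¹`-norm) of an exponent vector. -/
def degZ (a : Fin N → ℤ) : ℕ := ∑ i, (a i).natAbs

/-- The Laurent monomial `x^a ∈ k(x₁,…,x_N)` with exponent vector `a : Fin N → ℤ`. -/
def laur (a : Fin N → ℤ) : FractionRing (MvPolynomial (Fin N) k) :=
  ∏ i, (algebraMap (MvPolynomial (Fin N) k) (FractionRing (MvPolynomial (Fin N) k)) (X i)) ^ (a i)

/-- The lattice `L(G,V)` as an additive subgroup of `ℤᴺ`. -/
def latgrp (χ : Fin N → (G →* kˣ)) : AddSubgroup (Fin N → ℤ) where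
  carrier := {a | inLat χ a}
  zero_mem' := by intro g; simp
  add_mem' := by
    intro a b ha hb g
    simp only [Pi.add_apply, zpow_add]
    rw [Finset.prod_mul_distrib, ha g, hb g, mul_one]
  neg_mem' := by
    intro a ha g
    simp only [Pi.neg_apply, zpow_neg]
    rw [Finset.prod_inv_distrib, ha g, inv_one]


/-! ### Auxiliary lemmas for `stmt4` -/

section Stmt4Aux

variable {k : Type} [Field k] {N : ℕ} {G : Type}

lemma mv_isUnit_eq_C : ∀ {n : ℕ} {u : MvPolynomial (Fin n) k}, IsUnit u → ∃ c : k, u = C c := by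
  intro n
  induction n with
  | zero => intro u _; exact ⟨u.coeff 0, u.eq_C_of_isEmpty⟩
  | succ n ih =>
    intro u hu
    have h2 := hu.map (finSuccEquiv k n)
    obtain ⟨h0, hcs⟩ := (Polynomial.isUnit_iff_coeff_isUnit_isNilpotent).mp h2
    have hC : finSuccEquiv k n u = Polynomial.C ((finSuccEquiv k n u).coeff 0) := by
      refine Polynomial.ext fun i => ?_
      rcases Nat.eq_zero_or_pos i with rfl | hi
      · simp
      · rw [Polynomial.coeff_C, if_neg hi.ne']
        rw [(hcs i hi.ne').eq_zero]
    obtain ⟨c, hc⟩ := ih h0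
    refine ⟨c, (finSuccEquiv k n).injective ?_⟩
    rw [hC, hc]
    have h3 : finSuccEquiv k n (C c) = Polynomial.C (C c) := by
      simp [finSuccEquiv_apply]
    rw [h3]

lemma mAct_diag_monomial (c : Fin N → k) (m : Fin N →₀ ℕ) (a : k) :
    mAct (Matrix.diagonal c) (monomial m a)
      = monomial m ((∏ i, c i ^ m i) * a) := by
  have h1 : ∀ i : Fin N, (∑ j, C ((Matrix.diagonal c) i j) * X j : MvPolynomial (Fin N) k)
      = C (c i) * X i := by
    intro i
    rw [Finset.sum_eq_single i]
    · simp [Matrix.diagonal_apply_eq]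
    · intro j _ hj
      rw [Matrix.diagonal_apply_ne _ (Ne.symm hj)]
      simp
    · simp
  simp only [mAct, aeval_monomial, h1]
  rw [Finsupp.prod_fintype _ _ (fun i => by simp)]
  simp only [mul_pow, ← C_pow]
  rw [Finset.prod_mul_distrib, ← map_prod]
  rw [monomial_eq, Finsupp.prod_fintype _ _ (fun i => by simp)]
  rw [algebraMap_eq, ← mul_assoc, ← C_mul, mul_comm a]

lemma coeff_mAct_diag (c : Fin N → k) (p : MvPolynomial (Fin N) k) (m : Fin N →₀ ℕ) :
    coeff m (mAct (Matrix.diagonal c) p) = (∏ i, c i ^ m i) * coeff m p := by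
  conv_lhs => rw [p.as_sum, map_sum]
  rw [coeff_sum]
  simp only [mAct_diag_monomial, coeff_monomial]
  rw [Finset.sum_eq_single m]
  · rw [if_pos rfl]
  · intro m' _ hm'
    rw [if_neg hm']
  · intro hm
    rw [if_pos rfl, notMem_support_iff.mp hm, mul_zero]

lemma fAct_algebraMap (M : GL (Fin N) k) (p : MvPolynomial (Fin N) k) :
    fAct M (algebraMap (MvPolynomial (Fin N) k) (FractionRing (MvPolynomial (Fin N) k)) p)
      = algebraMap (MvPolynomial (Fin N) k) (FractionRing (MvPolynomial (Fin N) k))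
          (mAct (M : Matrix (Fin N) (Fin N) k) p) :=
  IsFractionRing.ringEquivOfRingEquiv_algebraMap _ p

lemma algX_ne_zero (i : Fin N) :
    algebraMap (MvPolynomial (Fin N) k) (FractionRing (MvPolynomial (Fin N) k)) (X i) ≠ 0 := by
  have h := IsFractionRing.injective (MvPolynomial (Fin N) k)
      (FractionRing (MvPolynomial (Fin N) k))
  exact (map_ne_zero_iff _ h).mpr (X_ne_zero i)

lemma laur_ne_zero (a : Fin N → ℤ) : (laur a : FractionRing (MvPolynomial (Fin N) k)) ≠ 0 :=
  Finset.prod_ne_zero_iff.mpr fun i _ => zpow_ne_zero _ (algX_ne_zero i)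

lemma laur_add (a b : Fin N → ℤ) :
    (laur (a + b) : FractionRing (MvPolynomial (Fin N) k)) = laur a * laur b := by
  rw [laur, laur, laur, ← Finset.prod_mul_distrib]
  exact Finset.prod_congr rfl fun i _ => zpow_add₀ (algX_ne_zero i) _ _

lemma laur_monomial (m : Fin N →₀ ℕ) :
    (laur (fun i => (m i : ℤ)) : FractionRing (MvPolynomial (Fin N) k))
      = algebraMap (MvPolynomial (Fin N) k) (FractionRing (MvPolynomial (Fin N) k))
          (monomial m 1) := by
  rw [laur, monomial_eq, map_one, one_mul,
    Finsupp.prod_fintype _ _ (fun i => by simp), map_prod]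
  exact Finset.prod_congr rfl fun i _ => by rw [zpow_natCast, map_pow]

end Stmt4Aux

/-- For a diagonal action of a finite abelian group `G` (in nonmodular
characteristic), every `G`-invariant rational function of degree at most `d` lies in the
subfield generated over `k` by the `G`-invariant Laurent monomials of degree at most `d`. -/
theorem stmt4 {k : Type} [Field k] {N : ℕ} {G : Type} [CommGroup G] [Fintype G]
    (hchar : (Fintype.card G : k) ≠ 0) (χ : Fin N → (G →* kˣ)) (d : ℕ)
    (f : FractionRing (MvPolynomial (Fin N) k))
    (hf : IsInv (diagρ χ) f) (hd : RDegLE f d) :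
    f ∈ IntermediateField.adjoin k
      {h : FractionRing (MvPolynomial (Fin N) k) |
        ∃ a : Fin N → ℤ, inLat χ a ∧ degZ a ≤ d ∧ h = laur a} := by
  classical
  obtain ⟨f₁, f₂, hf₂, hcop, hfe, hdeg⟩ := hd
  set F := IntermediateField.adjoin k
      {h : FractionRing (MvPolynomial (Fin N) k) |
        ∃ a : Fin N → ℤ, inLat χ a ∧ degZ a ≤ d ∧ h = laur a}
  by_cases hf₁ : f₁ = 0
  · rw [hfe, hf₁, map_zero, zero_div]
    exact zero_mem F
  have halg : Function.Injective
      (algebraMap (MvPolynomial (Fin N) k) (FractionRing (MvPolynomial (Fin N) k))) :=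
    IsFractionRing.injective _ _
  have h2 : algebraMap (MvPolynomial (Fin N) k) (FractionRing (MvPolynomial (Fin N) k)) f₂ ≠ 0 :=
    fun h => hf₂ (halg (by simpa using h))
  -- Semi-invariance: all monomials of f₁ and f₂ have the same character weight
  have key : ∀ g : G, ∀ m ∈ f₁.support ∪ f₂.support, ∀ m' ∈ f₁.support ∪ f₂.support,
      (∏ i, ((χ i g : k)) ^ m i) = ∏ i, ((χ i g : k)) ^ m' i := by
    intro g
    have hDiag : ((diagρ χ g : GL (Fin N) k) : Matrix (Fin N) (Fin N) k)
        = Matrix.diagonal (fun i => ((χ i g : kˣ) : k)) := rfl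
    have hAeq : ∀ p : MvPolynomial (Fin N) k,
        mEquiv (diagρ χ g) p = mAct ((diagρ χ g : GL (Fin N) k) : Matrix (Fin N) (Fin N) k) p :=
      fun p => rfl
    set A : MvPolynomial (Fin N) k →ₐ[k] MvPolynomial (Fin N) k :=
      mAct ((diagρ χ g : GL (Fin N) k) : Matrix (Fin N) (Fin N) k) with hA
    have hAcoeff : ∀ (p : MvPolynomial (Fin N) k) (m : Fin N →₀ ℕ),
        coeff m (A p) = (∏ i, (χ i g : k) ^ m i) * coeff m p := by
      intro p m
      rw [hA, hDiag]
      exact coeff_mAct_diag _ p m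
    have hAinj : Function.Injective A := by
      intro p q h
      have h' := (mEquiv (diagρ χ g)).injective (a₁ := p) (a₂ := q)
      rw [hAeq, hAeq] at h'
      exact h' h
    have hA2 : A f₂ ≠ 0 := fun h => hf₂ (hAinj (by rw [h, map_zero]))
    have hA2' : algebraMap (MvPolynomial (Fin N) k)
        (FractionRing (MvPolynomial (Fin N) k)) (A f₂) ≠ 0 :=
      fun h => hA2 (halg (by simpa using h))
    have hmain : A f₁ * f₂ = f₁ * A f₂ := by
      have h := hf g
      rw [hfe, map_div₀, fAct_algebraMap, fAct_algebraMap, ← hA] at h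
      rw [div_eq_div_iff hA2' h2] at h
      apply halg
      rw [map_mul, map_mul]
      exact h
    have hcopA : ∀ p : MvPolynomial (Fin N) k, p ∣ A f₁ → p ∣ A f₂ → IsUnit p := by
      intro p hp1 hp2
      have hsymm : ∀ q : MvPolynomial (Fin N) k, (mEquiv (diagρ χ g)).symm (A q) = q := by
        intro q
        rw [← hAeq]
        exact (mEquiv (diagρ χ g)).symm_apply_apply q
      have d1 : (mEquiv (diagρ χ g)).symm p ∣ f₁ := by
        have h' := map_dvd (mEquiv (diagρ χ g)).symm.toAlgHom hp1
        simpa [hsymm] using h'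
      have d2 : (mEquiv (diagρ χ g)).symm p ∣ f₂ := by
        have h' := map_dvd (mEquiv (diagρ χ g)).symm.toAlgHom hp2
        simpa [hsymm] using h'
      have hu := (hcop _ d1 d2).map (mEquiv (diagρ χ g)).toAlgHom
      simpa using hu
    have hrp : IsRelPrime f₁ f₂ := fun p hp1 hp2 => hcop p hp1 hp2
    have hrpA : IsRelPrime (A f₁) (A f₂) := fun p hp1 hp2 => hcopA p hp1 hp2
    have hd1 : f₁ ∣ A f₁ := hrp.dvd_of_dvd_mul_right ⟨A f₂, hmain⟩
    have hd2 : A f₁ ∣ f₁ := hrpA.dvd_of_dvd_mul_right ⟨f₂, hmain.symm⟩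
    obtain ⟨u, hu⟩ := associated_of_dvd_dvd hd1 hd2
    obtain ⟨cu, hcu⟩ := mv_isUnit_eq_C u.isUnit
    have hAf₁ : A f₁ = C cu * f₁ := by rw [← hu, hcu]; ring
    have hAf₂ : A f₂ = C cu * f₂ := by
      apply mul_left_cancel₀ hf₁
      rw [← hmain, hAf₁]; ring
    have hw : ∀ m ∈ f₁.support ∪ f₂.support, (∏ i, (χ i g : k) ^ m i) = cu := by
      intro m hm
      rcases Finset.mem_union.mp hm with hm | hm
      · have h := hAcoeff f₁ m
        rw [hAf₁, coeff_C_mul] at h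
        exact mul_right_cancel₀ (mem_support_iff.mp hm) h.symm
      · have h := hAcoeff f₂ m
        rw [hAf₂, coeff_C_mul] at h
        exact mul_right_cancel₀ (mem_support_iff.mp hm) h.symm
    intro m hm m' hm'
    rw [hw m hm, hw m' hm']
  -- choose base monomial m₀ in the support of the polynomial of smaller degree
  have hsum : ∀ (p : MvPolynomial (Fin N) k), ∀ m ∈ p.support,
      (∑ i, m i) ≤ p.totalDegree := by
    intro p m hm
    have h := le_totalDegree hm
    rwa [Finsupp.sum_fintype _ _ (fun i => rfl)] at h
  obtain ⟨m₀, hm₀, hm₀d⟩ : ∃ m₀ ∈ f₁.support ∪ f₂.support,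
      (∑ i, m₀ i) ≤ min f₁.totalDegree f₂.totalDegree := by
    rcases le_total f₁.totalDegree f₂.totalDegree with h | h
    · obtain ⟨m₀, hm₀⟩ := support_nonempty.mpr hf₁
      exact ⟨m₀, Finset.mem_union_left _ hm₀,
        by rw [min_eq_left h]; exact hsum f₁ m₀ hm₀⟩
    · obtain ⟨m₀, hm₀⟩ := support_nonempty.mpr hf₂
      exact ⟨m₀, Finset.mem_union_right _ hm₀,
        by rw [min_eq_right h]; exact hsum f₂ m₀ hm₀⟩
  set b : (Fin N →₀ ℕ) → (Fin N → ℤ) := fun m i => (m i : ℤ) - (m₀ i : ℤ) with hb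
  have hlat : ∀ m ∈ f₁.support ∪ f₂.support, inLat χ (b m) := by
    intro m hm g
    have hk : (∏ i, (χ i g : k) ^ m i) = ∏ i, (χ i g : k) ^ m₀ i := key g m hm m₀ hm₀
    have hu : (∏ i, χ i g ^ (m i)) = ∏ i, χ i g ^ (m₀ i) := by
      apply Units.ext
      push_cast
      exact hk
    simp only [hb, zpow_sub, zpow_natCast, div_eq_mul_inv]
    rw [Finset.prod_mul_distrib, Finset.prod_inv_distrib, hu]
    simp
  have hdegb : ∀ m ∈ f₁.support ∪ f₂.support, degZ (b m) ≤ d := by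
    intro m hm
    have h1 : degZ (b m) ≤ (∑ i, m i) + ∑ i, m₀ i := by
      rw [degZ, ← Finset.sum_add_distrib]
      refine Finset.sum_le_sum fun i _ => ?_
      simp only [hb]
      omega
    refine le_trans h1 (le_trans ?_ hdeg)
    rcases Finset.mem_union.mp hm with hm | hm
    · exact add_le_add (hsum f₁ m hm) (hm₀d.trans (min_le_right _ _))
    · rw [add_comm f₁.totalDegree]
      exact add_le_add (hsum f₂ m hm) (hm₀d.trans (min_le_left _ _))
  have hgen : ∀ m ∈ f₁.support ∪ f₂.support, (laur (b m)) ∈ F := fun m hm =>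
    IntermediateField.subset_adjoin _ _ ⟨b m, hlat m hm, hdegb m hm, rfl⟩
  set t : FractionRing (MvPolynomial (Fin N) k) := laur (fun i => -(m₀ i : ℤ)) with ht
  have hlb : ∀ m : Fin N →₀ ℕ, laur (b m)
      = algebraMap (MvPolynomial (Fin N) k) (FractionRing (MvPolynomial (Fin N) k))
          (monomial m 1) * t := by
    intro m
    have hsplit : b m = (fun i => (m i : ℤ)) + (fun i => -(m₀ i : ℤ)) :=
      funext fun i => by simp [hb, sub_eq_add_neg]
    rw [hsplit, laur_add, laur_monomial, ht]
  have hmem : ∀ p : MvPolynomial (Fin N) k, p.support ⊆ f₁.support ∪ f₂.support →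
      algebraMap (MvPolynomial (Fin N) k) (FractionRing (MvPolynomial (Fin N) k)) p * t ∈ F := by
    intro p hp
    have hsplit : algebraMap (MvPolynomial (Fin N) k)
          (FractionRing (MvPolynomial (Fin N) k)) p * t
        = ∑ m ∈ p.support,
            algebraMap k (FractionRing (MvPolynomial (Fin N) k)) (coeff m p) * laur (b m) := by
      conv_lhs => rw [p.as_sum]
      rw [map_sum, Finset.sum_mul]
      refine Finset.sum_congr rfl fun m hm => ?_
      rw [hlb]
      have hmono : (monomial m (coeff m p)) = C (coeff m p) * monomial m 1 := by
        rw [C_mul_monomial, mul_one]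
      rw [hmono, map_mul, mul_assoc,
        IsScalarTower.algebraMap_apply k (MvPolynomial (Fin N) k)
          (FractionRing (MvPolynomial (Fin N) k)), algebraMap_eq]
    rw [hsplit]
    exact sum_mem fun m hm => mul_mem (F.algebraMap_mem (coeff m p)) (hgen m (hp hm))
  have ht0 : t ≠ 0 := laur_ne_zero _
  have hfeq : f = (algebraMap (MvPolynomial (Fin N) k)
        (FractionRing (MvPolynomial (Fin N) k)) f₁ * t)
      / (algebraMap (MvPolynomial (Fin N) k) (FractionRing (MvPolynomial (Fin N) k)) f₂ * t) := by
    rw [hfe, mul_div_mul_right _ _ ht0]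
  rw [hfeq]
  exact div_mem (hmem f₁ Finset.subset_union_left) (hmem f₂ Finset.subset_union_right)
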